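/- Let d be a positive integer and let Q be a cube in ℝ^d. Suppose Q is the union of three pairwise disjoint measurable sets E₊, E₋, G with min{λ(E₊), λ(E₋)} > (√2 − 1)·λ(G). Then there exists a cube W ⊆ Q such that min{λ(E₊ ∩ W), λ(E₋ ∩ W)} ≥ 2^{−d}(3 − 2√2)·λ(W). Consequently, (√2 − 1, 2^{−d}(3 − 2√2)) is a John–Strömberg pair for the collection of all cubes in ℝ^d. -/

import Mathlib

open MeasureTheory Set

/-- A closed axis-parallel cube in `ℝ^d` with positive side length. -/
def IsCube {d : ℕ} (Q : Set (Fin d → ℝ)) : Prop :=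
  ∃ (a : Fin d → ℝ) (r : ℝ), 0 < r ∧ Q = Set.univ.pi fun i => Set.Icc (a i) (a i + r)

/-- `(τ,s)` is a John–Strömberg pair for the collection `𝓔`. -/
def IsJSPair {X : Type*} [MeasurableSpace X] (μ : Measure X)
    (𝓔 : Set (Set X)) (τ s : ℝ) : Prop :=
  0 < τ ∧ 0 < s ∧
  ∀ Q ∈ 𝓔, ∀ Ep Em G : Set X,
    MeasurableSet Ep → MeasurableSet Em → MeasurableSet G →
    Disjoint Ep Em → Disjoint Ep G → Disjoint Em G →
    Q = Ep ∪ Em ∪ G →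
    ENNReal.ofReal τ * μ G < min (μ Ep) (μ Em) →
    ∃ W ∈ 𝓔, W ⊆ Q ∧ ENNReal.ofReal s * μ W ≤ min (μ (W ∩ Ep)) (μ (W ∩ Em))

open Filter

namespace JSAux

variable {d : ℕ}

noncomputable def tau : ℝ := Real.sqrt 2 - 1
noncomputable def sc (d : ℕ) : ℝ := (2:ℝ) ^ (-(d:ℤ)) * (3 - 2 * Real.sqrt 2)

lemma sqrt2_lt : (1:ℝ) < Real.sqrt 2 ∧ Real.sqrt 2 < 3/2 := by
  have h := Real.sq_sqrt (by norm_num : (2:ℝ) ≥ 0)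
  have h0 := Real.sqrt_nonneg 2
  constructor <;> nlinarith

lemma tau_pos : 0 < tau := by have := sqrt2_lt.1; simp [tau]; linarith
lemma tau_lt_one : tau < 1 := by have := sqrt2_lt.2; simp [tau]; linarith
lemma tau_sq : tau ^ 2 = 3 - 2 * Real.sqrt 2 := by
  have h := Real.sq_sqrt (by norm_num : (2:ℝ) ≥ 0)
  simp [tau]; ring_nf; nlinarith
lemma sc_eq (d : ℕ) : sc d = (2:ℝ)⁻¹ ^ d * tau ^ 2 := by
  rw [sc, tau_sq, zpow_neg, zpow_natCast, inv_pow]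
lemma sc_pos (d : ℕ) : 0 < sc d := by
  rw [sc_eq]; have := tau_pos; positivity
lemma sc_mul_pow (d : ℕ) : sc d * 2 ^ d = tau ^ 2 := by
  rw [sc_eq]; field_simp
  rw [mul_right_comm, ← mul_pow]; norm_num
lemma sc_le_tau (d : ℕ) : sc d ≤ tau := by
  rw [sc_eq]
  have h1 : (2:ℝ)⁻¹ ^ d ≤ 1 := by
    apply pow_le_one₀ <;> norm_num
  have h2 : tau ^ 2 ≤ tau := by
    nlinarith [tau_pos, tau_lt_one]
  nlinarith [tau_pos, sq_nonneg tau]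
lemma sc_lt_one (d : ℕ) : sc d < 1 := lt_of_le_of_lt (le_trans (sc_le_tau d) le_rfl) tau_lt_one
lemma key_ineq (d : ℕ) : sc d + (tau ^ 2 + tau) ≤ 1 := by
  have h : tau ^ 2 + tau = 1 - tau := by
    have := tau_sq
    have h2 := Real.sq_sqrt (by norm_num : (2:ℝ) ≥ 0)
    simp [tau] at *; nlinarith
  rw [h]; have := sc_le_tau d; linarith

def cell (a : Fin d → ℝ) (r : ℝ) (k : ℕ) (j : Fin d → ℕ) : Set (Fin d → ℝ) :=
  Set.univ.pi fun i => Icc (a i + j i * (r / 2 ^ k)) (a i + (j i + 1) * (r / 2 ^ k))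

lemma cell_measurable (a : Fin d → ℝ) (r : ℝ) (k : ℕ) (j : Fin d → ℕ) :
    MeasurableSet (cell a r k j) :=
  MeasurableSet.univ_pi fun _ => measurableSet_Icc

lemma volume_cell (a : Fin d → ℝ) {r : ℝ} (hr : 0 < r) (k : ℕ) (j : Fin d → ℕ) :
    volume (cell a r k j) = ENNReal.ofReal (r / 2 ^ k) ^ d := by
  rw [cell, volume_pi_pi]
  have : ∀ i : Fin d, volume (Icc (a i + j i * (r / 2 ^ k)) (a i + (j i + 1) * (r / 2 ^ k)))
      = ENNReal.ofReal (r / 2 ^ k) := by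
    intro i; rw [Real.volume_Icc]; ring_nf
  simp [this]

lemma volume_cell_ne_top (a : Fin d → ℝ) {r : ℝ} (hr : 0 < r) (k : ℕ) (j : Fin d → ℕ) :
    volume (cell a r k j) ≠ ⊤ := by
  rw [volume_cell a hr]; exact ENNReal.pow_ne_top ENNReal.ofReal_ne_top

lemma volume_cell_parent (a : Fin d → ℝ) {r : ℝ} (hr : 0 < r) (k : ℕ) (j j' : Fin d → ℕ) :
    volume (cell a r k j') = 2 ^ d * volume (cell a r (k + 1) j) := by
  rw [volume_cell a hr, volume_cell a hr]
  have h2 : r / 2 ^ k = 2 * (r / 2 ^ (k + 1)) := by ring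
  rw [h2, ENNReal.ofReal_mul (by norm_num), mul_pow]
  norm_num

lemma cell_subset_cell (a : Fin d → ℝ) {r : ℝ} (hr : 0 < r) (k m : ℕ) (j : Fin d → ℕ) :
    cell a r (k + m) j ⊆ cell a r k (fun i => j i / 2 ^ m) := by
  intro x hx i _
  have hxi := hx i (mem_univ i)
  simp only [mem_Icc] at hxi ⊢
  have he : (0:ℝ) < r / 2 ^ (k + m) := by positivity
  have hsplit : r / 2 ^ k = 2 ^ m * (r / 2 ^ (k + m)) := by
    field_simp; ring
  constructor
  · calc a i + (j i / 2 ^ m : ℕ) * (r / 2 ^ k)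
        = a i + ((j i / 2 ^ m : ℕ) * 2 ^ m : ℕ) * (r / 2 ^ (k + m)) := by
          push_cast [hsplit]; ring
      _ ≤ a i + j i * (r / 2 ^ (k + m)) := by
          have : ((j i / 2 ^ m) * 2 ^ m : ℕ) ≤ j i := Nat.div_mul_le_self _ _
          have := (Nat.cast_le (α := ℝ)).2 this
          nlinarith
      _ ≤ x i := hxi.1
  · calc x i ≤ a i + (j i + 1) * (r / 2 ^ (k + m)) := hxi.2
      _ ≤ a i + (((j i / 2 ^ m) + 1) * 2 ^ m : ℕ) * (r / 2 ^ (k + m)) := by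
          have : j i + 1 ≤ ((j i / 2 ^ m) + 1) * 2 ^ m := by
            have h0 := Nat.lt_div_mul_add (a := j i) (b := 2 ^ m) (by positivity)
            rw [add_mul, one_mul]; exact h0
          have := (Nat.cast_le (α := ℝ)).2 this
          push_cast at this ⊢
          nlinarith
      _ = a i + ((j i / 2 ^ m : ℕ) + 1) * (r / 2 ^ k) := by
          push_cast [hsplit]; ring

lemma cell_subset_base (a : Fin d → ℝ) {r : ℝ} (hr : 0 < r) (k : ℕ) (j : Fin d → ℕ)
    (hj : ∀ i, j i < 2 ^ k) : cell a r k j ⊆ cell a r 0 (fun _ => 0) := by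
  have h := cell_subset_cell a hr 0 k j
  simp only [zero_add] at h
  have : (fun i => j i / 2 ^ k) = (fun _ => 0 : Fin d → ℕ) := by
    funext i; exact Nat.div_eq_of_lt (hj i)
  rwa [this] at h

lemma cell_zero (a : Fin d → ℝ) (r : ℝ) :
    cell a r 0 (fun _ => 0) = Set.univ.pi fun i => Icc (a i) (a i + r) := by
  unfold cell; norm_num

lemma cell_disjoint (a : Fin d → ℝ) {r : ℝ} (hr : 0 < r) (k : ℕ) {j j' : Fin d → ℕ}
    (hjj : j ≠ j') : volume (cell a r k j ∩ cell a r k j') = 0 := by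
  obtain ⟨i, hi⟩ := Function.ne_iff.1 hjj
  rw [cell, cell, ← Set.pi_inter_distrib, volume_pi_pi]
  apply Finset.prod_eq_zero (Finset.mem_univ i)
  rw [Set.Icc_inter_Icc, Real.volume_Icc, ENNReal.ofReal_eq_zero]
  have he : (0:ℝ) < r / 2 ^ k := by positivity
  rcases lt_or_gt_of_ne hi with h | h
  · have : (j i : ℝ) + 1 ≤ j' i := by exact_mod_cast h
    have h1 : min (a i + (j i + 1) * (r / 2 ^ k)) (a i + (j' i + 1) * (r / 2 ^ k))
        ≤ a i + (j i + 1) * (r / 2 ^ k) := min_le_left _ _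
    have h2 : a i + (j' i) * (r / 2 ^ k)
        ≤ max (a i + j i * (r / 2 ^ k)) (a i + j' i * (r / 2 ^ k)) := le_max_right _ _
    nlinarith
  · have : (j' i : ℝ) + 1 ≤ j i := by exact_mod_cast h
    have h1 : min (a i + (j i + 1) * (r / 2 ^ k)) (a i + (j' i + 1) * (r / 2 ^ k))
        ≤ a i + (j' i + 1) * (r / 2 ^ k) := min_le_right _ _
    have h2 : a i + (j i) * (r / 2 ^ k)
        ≤ max (a i + j i * (r / 2 ^ k)) (a i + j' i * (r / 2 ^ k)) := le_max_left _ _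
    nlinarith

noncomputable def idx (a : Fin d → ℝ) (r : ℝ) (x : Fin d → ℝ) (k : ℕ) : Fin d → ℕ :=
  fun i => ⌊(x i - a i) / (r / 2 ^ k)⌋₊

lemma idx_lt {a : Fin d → ℝ} {r : ℝ} (hr : 0 < r) {x : Fin d → ℝ}
    (hx : ∀ i, x i ∈ Ico (a i) (a i + r)) (k : ℕ) (i : Fin d) : idx a r x k i < 2 ^ k := by
  have he : (0:ℝ) < r / 2 ^ k := by positivity
  rw [idx, Nat.floor_lt (div_nonneg (by linarith [(hx i).1]) he.le), div_lt_iff₀ he]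
  have := (hx i).2
  have h2 : (2:ℝ) ^ k * (r / 2 ^ k) = r := by field_simp
  push_cast
  nlinarith

lemma mem_cell_idx {a : Fin d → ℝ} {r : ℝ} (hr : 0 < r) {x : Fin d → ℝ}
    (hx : ∀ i, x i ∈ Ico (a i) (a i + r)) (k : ℕ) : x ∈ cell a r k (idx a r x k) := by
  intro i _
  have he : (0:ℝ) < r / 2 ^ k := by positivity
  have h0 : 0 ≤ (x i - a i) / (r / 2 ^ k) := div_nonneg (by linarith [(hx i).1]) he.le
  constructor
  · have := Nat.floor_le h0
    rw [le_div_iff₀ he] at this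
    simp only [idx]; linarith
  · have := Nat.lt_floor_add_one ((x i - a i) / (r / 2 ^ k))
    rw [div_lt_iff₀ he] at this
    simp only [idx]; push_cast; nlinarith [le_of_lt this]

lemma idx_div {a : Fin d → ℝ} {r : ℝ} (hr : 0 < r) {x : Fin d → ℝ}
    (hx : ∀ i, x i ∈ Ico (a i) (a i + r)) (k m : ℕ) :
    idx a r x k = fun i => idx a r x (k + m) i / 2 ^ m := by
  funext i
  have he : (0:ℝ) < r / 2 ^ (k + m) := by positivity
  have key : (x i - a i) / (r / 2 ^ k) = ((x i - a i) / (r / 2 ^ (k + m))) / (2 ^ m : ℕ) := by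
    push_cast; field_simp; ring
  rw [idx, key, Nat.floor_div_natCast]
  rfl

lemma cell_subset_closedBall {a : Fin d → ℝ} {r : ℝ} (hr : 0 < r) (k : ℕ) (j : Fin d → ℕ)
    {x : Fin d → ℝ} (hx : x ∈ cell a r k j) :
    cell a r k j ⊆ Metric.closedBall x (r / 2 ^ k) := by
  intro y hy
  rw [Metric.mem_closedBall]
  have he : (0:ℝ) < r / 2 ^ k := by positivity
  rw [dist_pi_le_iff he.le]
  intro i
  have h1 := hx i (mem_univ i); have h2 := hy i (mem_univ i)
  simp only [mem_Icc] at h1 h2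
  rw [Real.dist_eq, abs_le]
  constructor <;> nlinarith

lemma volume_closedBall_eq (x : Fin d → ℝ) {ρ : ℝ} (hρ : 0 ≤ ρ) :
    volume (Metric.closedBall x ρ) = ENNReal.ofReal (2 * ρ) ^ d := by
  rw [closedBall_pi x hρ]
  rw [volume_pi_pi]
  have : ∀ i : Fin d, volume (Metric.closedBall (x i) ρ) = ENNReal.ofReal (2 * ρ) := by
    intro i; rw [Real.closedBall_eq_Icc, Real.volume_Icc]; ring_nf
  simp [this]

lemma two_pow_eq (d : ℕ) : (2:ENNReal) ^ d = ENNReal.ofReal ((2:ℝ) ^ d) := by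
  rw [ENNReal.ofReal_pow (by norm_num)]
  norm_num

lemma exists_good_cell {a : Fin d → ℝ} {r : ℝ} (hr : 0 < r) {E : Set (Fin d → ℝ)}
    (hE : MeasurableSet E) {x : Fin d → ℝ}
    (htend : Tendsto (fun ρ => volume (E ∩ Metric.closedBall x ρ) / volume (Metric.closedBall x ρ))
      (nhdsWithin 0 (Ioi 0)) (nhds 1))
    (hx : ∀ i, x i ∈ Ico (a i) (a i + r)) :
    ∃ k, ENNReal.ofReal (sc d) * volume (cell a r k (idx a r x k)) ≤
      volume (E ∩ cell a r k (idx a r x k)) := by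
  have hseq : Tendsto (fun k : ℕ => r / 2 ^ k) atTop (nhdsWithin 0 (Ioi 0)) := by
    rw [tendsto_nhdsWithin_iff]
    constructor
    · have h0 : Tendsto (fun k : ℕ => ((1:ℝ)/2) ^ k) atTop (nhds 0) :=
        tendsto_pow_atTop_nhds_zero_of_lt_one (by norm_num) (by norm_num)
      have := h0.const_mul r
      simpa [div_eq_mul_inv, mul_comm, mul_pow] using this
    · exact Eventually.of_forall fun k => mem_Ioi.2 (by positivity)
  have h2 := htend.comp hseq
  set ε : ℝ := (1 - sc d) / 2 ^ d with hεdef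
  have hsc1 := sc_lt_one d
  have hsc0 := sc_pos d
  have hε : 0 < ε := div_pos (by linarith) (by positivity)
  have hε1 : ε ≤ 1 - sc d := by
    rw [hεdef]
    exact div_le_self (by linarith) (one_le_pow₀ (by norm_num))
  have h3 : ENNReal.ofReal (1 - ε) < 1 := by
    rw [ENNReal.ofReal_lt_one]; linarith
  obtain ⟨k, hk⟩ := (h2.eventually (eventually_gt_nhds h3)).exists
  set ρ := r / 2 ^ k with hρdef
  have hρ : 0 < ρ := by rw [hρdef]; positivity
  set B := Metric.closedBall x ρ with hBdef
  set c := cell a r k (idx a r x k) with hcdef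
  have hcB : c ⊆ B := cell_subset_closedBall hr k _ (mem_cell_idx hr hx k)
  have hBvol : volume B = ENNReal.ofReal (2 * ρ) ^ d := volume_closedBall_eq x hρ.le
  have hB0 : volume B ≠ 0 := by
    rw [hBvol]; apply pow_ne_zero; simp [ENNReal.ofReal_eq_zero]; linarith
  have hBtop : volume B ≠ ⊤ := by
    rw [hBvol]; exact ENNReal.pow_ne_top ENNReal.ofReal_ne_top
  have hk2 : ENNReal.ofReal (1 - ε) * volume B < volume (E ∩ B) :=
    (ENNReal.lt_div_iff_mul_lt (Or.inl hB0) (Or.inl hBtop)).1 hk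
  have hsplitB : volume (B ∩ E) + volume (B \ E) = volume B := measure_inter_add_diff B hE
  have hdiffB : volume (B \ E) ≤ ENNReal.ofReal ε * volume B := by
    rw [← ENNReal.add_le_add_iff_left (a := ENNReal.ofReal (1 - ε) * volume B)
      (ENNReal.mul_ne_top ENNReal.ofReal_ne_top hBtop)]
    calc ENNReal.ofReal (1 - ε) * volume B + volume (B \ E)
        ≤ volume (B ∩ E) + volume (B \ E) := by
          gcongr
          rw [inter_comm]; exact hk2.le
      _ = volume B := hsplitB
      _ = (ENNReal.ofReal (1 - ε) + ENNReal.ofReal ε) * volume B := by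
          rw [← ENNReal.ofReal_add (by linarith) hε.le]
          norm_num
      _ = ENNReal.ofReal (1 - ε) * volume B + ENNReal.ofReal ε * volume B := by ring
  have hcvol : volume c = ENNReal.ofReal ρ ^ d := volume_cell a hr k _
  have hBc : volume B = 2 ^ d * volume c := by
    rw [hBvol, hcvol, ENNReal.ofReal_mul (by norm_num), mul_pow]
    norm_num
  have hdiffc : volume (c \ E) ≤ ENNReal.ofReal (1 - sc d) * volume c := by
    calc volume (c \ E) ≤ volume (B \ E) := measure_mono (diff_subset_diff_left hcB)
      _ ≤ ENNReal.ofReal ε * volume B := hdiffB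
      _ = ENNReal.ofReal ε * 2 ^ d * volume c := by rw [hBc]; ring
      _ ≤ ENNReal.ofReal (1 - sc d) * volume c := by
          gcongr
          rw [two_pow_eq, ← ENNReal.ofReal_mul hε.le]
          apply ENNReal.ofReal_le_ofReal
          rw [hεdef]; rw [div_mul_eq_mul_div, mul_div_assoc]
          field_simp
          exact le_rfl
  refine ⟨k, ?_⟩
  have hsplitc : volume (c ∩ E) + volume (c \ E) = volume c :=
    measure_inter_add_diff c hE
  have hctop : volume c ≠ ⊤ := by
    rw [hcvol]; exact ENNReal.pow_ne_top ENNReal.ofReal_ne_top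
  rw [inter_comm]
  rw [← ENNReal.add_le_add_iff_right (a := volume (c \ E))
    (ne_top_of_le_ne_top hctop (le_trans (measure_mono diff_subset) le_rfl))]
  calc ENNReal.ofReal (sc d) * volume c + volume (c \ E)
      ≤ ENNReal.ofReal (sc d) * volume c + ENNReal.ofReal (1 - sc d) * volume c := by gcongr
    _ = (ENNReal.ofReal (sc d) + ENNReal.ofReal (1 - sc d)) * volume c := by ring
    _ = volume c := by
        rw [← ENNReal.ofReal_add hsc0.le (by linarith)]
        norm_num
    _ = volume (c ∩ E) + volume (c \ E) := hsplitc.symm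

lemma sigma_two_pow (d : ℕ) :
    ENNReal.ofReal (sc d) * 2 ^ d = ENNReal.ofReal tau ^ 2 := by
  rw [two_pow_eq, ← ENNReal.ofReal_mul (sc_pos d).le, sc_mul_pow,
    ENNReal.ofReal_pow tau_pos.le]

lemma key {d : ℕ} (a : Fin d → ℝ) {r : ℝ} (hr : 0 < r)
    (E F G : Set (Fin d → ℝ)) (hE : MeasurableSet E) (hGm : MeasurableSet G)
    (hEQ : E ⊆ cell a r 0 (fun _ => 0))
    (hcover : cell a r 0 (fun _ => 0) ⊆ E ∪ F ∪ G)
    (hG : ENNReal.ofReal tau * volume G < volume E)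
    (hsmall : volume E < ENNReal.ofReal (sc d) * volume (cell a r 0 (fun _ => 0))) :
    ∃ k j, (∀ i, j i < 2 ^ k) ∧
      ENNReal.ofReal (sc d) * volume (cell a r k j) ≤ volume (E ∩ cell a r k j) ∧
      ENNReal.ofReal (sc d) * volume (cell a r k j) ≤ volume (F ∩ cell a r k j) := by
  set σ := ENNReal.ofReal (sc d) with hσ
  set T := ENNReal.ofReal tau with hT
  set Good : ℕ × (Fin d → ℕ) → Prop :=
    fun p => σ * volume (cell a r p.1 p.2) ≤ volume (E ∩ cell a r p.1 p.2) with hGood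
  set S : Set (ℕ × (Fin d → ℕ)) :=
    {p | (∀ i, p.2 i < 2 ^ p.1) ∧ Good p ∧
      ∀ k' < p.1, ¬ Good (k', fun i => p.2 i / 2 ^ (p.1 - k'))} with hS
  have hnotGood0 : ¬ Good (0, fun _ => 0) := by
    rw [hGood]
    simp only [not_le]
    rw [inter_eq_left.mpr hEQ]
    exact hsmall
  -- the parent density bound
  have hparent : ∀ p ∈ S, volume (E ∩ cell a r p.1 p.2) ≤ T ^ 2 * volume (cell a r p.1 p.2) := by
    rintro ⟨k, j⟩ hp
    obtain ⟨hb, hg, hmin⟩ := hp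
    rcases Nat.eq_zero_or_pos k with rfl | hk
    · exfalso
      apply hnotGood0
      have : j = (fun _ => 0 : Fin d → ℕ) := by
        funext i; exact Nat.lt_one_iff.1 (by simpa using hb i)
      rwa [← this]
    · obtain ⟨k', rfl⟩ : ∃ k', k = k' + 1 := ⟨k - 1, (Nat.succ_pred_eq_of_pos hk).symm⟩
      have hnp := hmin k' (Nat.lt_succ_self k')
      simp only [Nat.add_sub_cancel_left, pow_one] at hnp
      rw [hGood, not_le] at hnp
      have hsub : cell a r (k' + 1) j ⊆ cell a r k' (fun i => j i / 2 ^ 1) :=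
        cell_subset_cell a hr k' 1 j
      calc volume (E ∩ cell a r (k' + 1) j)
          ≤ volume (E ∩ cell a r k' (fun i => j i / 2)) := by
            apply measure_mono
            apply inter_subset_inter_right
            simpa using hsub
        _ ≤ σ * volume (cell a r k' (fun i => j i / 2)) := by
            simpa using hnp.le
        _ = σ * (2 ^ d * volume (cell a r (k' + 1) j)) := by
            rw [volume_cell_parent a hr k' j (fun i => j i / 2)]
        _ = (σ * 2 ^ d) * volume (cell a r (k' + 1) j) := by ring
        _ = T ^ 2 * volume (cell a r (k' + 1) j) := by rw [hσ, hT, sigma_two_pow]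
  -- a.e. pairwise disjointness of cells of S
  have haux : ∀ p ∈ S, ∀ q ∈ S, p.1 ≤ q.1 → p ≠ q →
      volume (cell a r p.1 p.2 ∩ cell a r q.1 q.2) = 0 := by
    rintro ⟨k, j⟩ hp ⟨k', j'⟩ hq hle hne
    rcases eq_or_lt_of_le hle with heq | hlt
    · simp only at heq; subst heq
      have : j ≠ j' := by
        intro h; exact hne (by rw [h])
      exact cell_disjoint a hr k this
    · have hm : k + (k' - k) = k' := Nat.add_sub_cancel' hle
      have hnotg := hq.2.2 k hlt
      have hja : (fun i => j' i / 2 ^ (k' - k)) ≠ j := by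
        intro h
        rw [h] at hnotg
        exact hnotg hp.2.1
      have hsub : cell a r k' j' ⊆ cell a r k (fun i => j' i / 2 ^ (k' - k)) := by
        have := cell_subset_cell a hr k (k' - k) j'
        rwa [hm] at this
      apply measure_mono_null (inter_subset_inter_right _ hsub)
      exact cell_disjoint a hr k (Ne.symm hja)
  have hdisj : ∀ p ∈ S, ∀ q ∈ S, p ≠ q →
      volume (cell a r p.1 p.2 ∩ cell a r q.1 q.2) = 0 := by
    intro p hp q hq hne
    rcases le_total p.1 q.1 with h | h
    · exact haux p hp q hq h hne
    · rw [inter_comm]; exact haux q hq p hp h (Ne.symm hne)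
  have hScount : S.Countable := S.to_countable
  set U : Set (Fin d → ℝ) := ⋃ p ∈ S, cell a r p.1 p.2 with hU
  have hUmeas : MeasurableSet U :=
    MeasurableSet.biUnion hScount fun p _ => cell_measurable a r p.1 p.2
  -- covering of E
  have hcov : volume (E \ U) = 0 := by
    have hQo : volume (cell a r 0 (fun _ => 0) \ Set.univ.pi fun i => Ico (a i) (a i + r)) = 0 := by
      have h1 : (Set.univ.pi fun i => Ico (a i) (a i + r)) ⊆ cell a r 0 (fun _ => 0) := by
        intro x hx i _
        have := hx i (mem_univ i)
        simp only [mem_Ico] at this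
        simp only [mem_Icc]
        constructor <;> [linarith; nlinarith]
      rw [measure_diff h1 (MeasurableSet.univ_pi fun i => measurableSet_Ico).nullMeasurableSet]
      · rw [volume_pi_pi, volume_cell a hr]
        have : ∀ i : Fin d, volume (Ico (a i) (a i + r)) = ENNReal.ofReal (r / 2 ^ 0) := by
          intro i; rw [Real.volume_Ico]; norm_num
        simp only [this, Finset.prod_const, Finset.card_univ, Fintype.card_fin]
        simp
      · rw [volume_pi_pi]
        exact ENNReal.prod_ne_top fun i _ => by rw [Real.volume_Ico]; exact ENNReal.ofReal_ne_top
    have hae1 := Besicovitch.ae_tendsto_measure_inter_div volume E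
    have hae2 : ∀ᵐ x ∂(volume.restrict E), ∀ i, x i ∈ Ico (a i) (a i + r) := by
      rw [ae_restrict_iff' hE, ae_iff]
      apply measure_mono_null _ hQo
      intro x hx
      simp only [mem_setOf_eq, not_forall] at hx
      obtain ⟨hxE, hni⟩ := hx
      refine ⟨hEQ hxE, fun hmem => ?_⟩
      obtain ⟨i, hi⟩ := hni
      exact hi (hmem i (mem_univ i))
    have hmemU : ∀ᵐ x ∂(volume.restrict E), x ∈ U := by
      filter_upwards [hae1, hae2] with x h1 h2
      obtain ⟨k0, hk0⟩ := exists_good_cell hr hE h1 h2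
      have hgood : ∃ k, Good (k, idx a r x k) := ⟨k0, hk0⟩
      set kk := Nat.find hgood with hkk
      have hmem : (kk, idx a r x kk) ∈ S := by
        refine ⟨fun i => idx_lt hr h2 kk i, Nat.find_spec hgood, ?_⟩
        intro k' hk'
        have := Nat.find_min hgood hk'
        have hcomp : idx a r x k' = fun i => idx a r x kk i / 2 ^ (kk - k') := by
          have h := idx_div hr h2 k' (kk - k')
          rwa [Nat.add_sub_cancel' hk'.le] at h
        simpa [← hcomp] using this
      exact mem_biUnion hmem (mem_cell_idx hr h2 kk)
    rw [ae_restrict_iff' hE, ae_iff] at hmemU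
    apply measure_mono_null _ hmemU
    intro x hx
    simp only [mem_setOf_eq, not_forall]
    exact ⟨hx.1, hx.2⟩
  -- sums over the stopped cubes
  have hmeasE : ∀ p ∈ S, NullMeasurableSet (E ∩ cell a r p.1 p.2) volume :=
    fun p _ => (hE.inter (cell_measurable a r p.1 p.2)).nullMeasurableSet
  have hmeasG : ∀ p ∈ S, NullMeasurableSet (G ∩ cell a r p.1 p.2) volume :=
    fun p _ => (hGm.inter (cell_measurable a r p.1 p.2)).nullMeasurableSet
  have hpairE : S.Pairwise (Function.onFun (AEDisjoint volume)
      (fun p => E ∩ cell a r p.1 p.2)) := fun p hp q hq hne =>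
    measure_mono_null (inter_subset_inter inter_subset_right inter_subset_right)
      (hdisj p hp q hq hne)
  have hpairG : S.Pairwise (Function.onFun (AEDisjoint volume)
      (fun p => G ∩ cell a r p.1 p.2)) := fun p hp q hq hne =>
    measure_mono_null (inter_subset_inter inter_subset_right inter_subset_right)
      (hdisj p hp q hq hne)
  have hEU : volume E ≤ ∑' p : S, volume (E ∩ cell a r p.1.1 p.1.2) := by
    have h1 : volume E = volume (E ∩ U) + volume (E \ U) :=
      (measure_inter_add_diff E hUmeas).symm
    rw [h1, hcov, add_zero]
    have h2 : E ∩ U = ⋃ p ∈ S, E ∩ cell a r p.1 p.2 := by rw [hU, inter_iUnion₂]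
    rw [h2, measure_biUnion₀ hScount hpairE hmeasE]
  have hGU : ∑' p : S, volume (G ∩ cell a r p.1.1 p.1.2) ≤ volume G := by
    rw [← measure_biUnion₀ hScount hpairG hmeasG]
    exact measure_mono (iUnion₂_subset fun p hp => inter_subset_left)
  have hTne0 : T ≠ 0 := by
    rw [hT]; simp [ENNReal.ofReal_eq_zero, not_le]; exact tau_pos
  have hTtop : T ≠ ⊤ := ENNReal.ofReal_ne_top
  have hfind : ∃ p ∈ S, volume (G ∩ cell a r p.1 p.2) ≤ T * volume (cell a r p.1 p.2) := by
    by_contra hcon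
    push_neg at hcon
    have hsum1 : volume E ≤ T ^ 2 * ∑' p : S, volume (cell a r p.1.1 p.1.2) := by
      calc volume E ≤ ∑' p : S, volume (E ∩ cell a r p.1.1 p.1.2) := hEU
        _ ≤ ∑' p : S, T ^ 2 * volume (cell a r p.1.1 p.1.2) :=
            Summable.tsum_le_tsum (fun p => hparent p.1 p.2) ENNReal.summable ENNReal.summable
        _ = T ^ 2 * ∑' p : S, volume (cell a r p.1.1 p.1.2) := ENNReal.tsum_mul_left
    have hsum2 : T * ∑' p : S, volume (cell a r p.1.1 p.1.2) ≤ volume G := by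
      calc T * ∑' p : S, volume (cell a r p.1.1 p.1.2)
          = ∑' p : S, T * volume (cell a r p.1.1 p.1.2) := ENNReal.tsum_mul_left.symm
        _ ≤ ∑' p : S, volume (G ∩ cell a r p.1.1 p.1.2) :=
            Summable.tsum_le_tsum (fun p => (hcon p.1 p.2).le) ENNReal.summable ENNReal.summable
        _ ≤ volume G := hGU
    have hdiv : ∑' p : S, volume (cell a r p.1.1 p.1.2) ≤ volume G / T :=
      (ENNReal.le_div_iff_mul_le (Or.inl hTne0) (Or.inl hTtop)).2
        (by rwa [mul_comm] at hsum2)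
    have hfinal : volume E ≤ T * volume G := by
      calc volume E ≤ T ^ 2 * ∑' p : S, volume (cell a r p.1.1 p.1.2) := hsum1
        _ ≤ T ^ 2 * (volume G / T) := by gcongr
        _ = T * volume G := by
            rw [pow_two, mul_assoc, ENNReal.mul_div_cancel hTne0 hTtop]
    exact absurd hG (not_lt.2 hfinal)
  obtain ⟨p, hpS, hGp⟩ := hfind
  refine ⟨p.1, p.2, hpS.1, hpS.2.1, ?_⟩
  set W := cell a r p.1 p.2 with hW
  have hWQ : W ⊆ cell a r 0 (fun _ => 0) := cell_subset_base a hr _ _ hpS.1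
  have hWsub : W ⊆ (E ∩ W) ∪ ((F ∩ W) ∪ (G ∩ W)) := by
    intro x hx
    rcases hcover (hWQ hx) with (h | h) | h
    · exact Or.inl ⟨h, hx⟩
    · exact Or.inr (Or.inl ⟨h, hx⟩)
    · exact Or.inr (Or.inr ⟨h, hx⟩)
  have hWle : volume W ≤ volume (E ∩ W) + (volume (F ∩ W) + volume (G ∩ W)) :=
    le_trans (measure_mono hWsub)
      (le_trans (measure_union_le _ _) (by gcongr; exact measure_union_le _ _))
  have hEb : volume (E ∩ W) ≤ T ^ 2 * volume W := hparent p hpS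
  have hWtop : volume W ≠ ⊤ := volume_cell_ne_top a hr p.1 p.2
  have hfin : T ^ 2 * volume W + T * volume W ≠ ⊤ :=
    ENNReal.add_ne_top.2 ⟨ENNReal.mul_ne_top (ENNReal.pow_ne_top hTtop) hWtop,
      ENNReal.mul_ne_top hTtop hWtop⟩
  have hcoef : σ + (T ^ 2 + T) ≤ 1 := by
    have heq : σ + (T ^ 2 + T) = ENNReal.ofReal (sc d + (tau ^ 2 + tau)) := by
      rw [ENNReal.ofReal_add (sc_pos d).le (add_nonneg (sq_nonneg tau) tau_pos.le),
        ENNReal.ofReal_add (sq_nonneg tau) tau_pos.le, ENNReal.ofReal_pow tau_pos.le]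
    rw [heq]
    exact ENNReal.ofReal_le_one.2 (key_ineq d)
  rw [← ENNReal.add_le_add_iff_right hfin]
  calc σ * volume W + (T ^ 2 * volume W + T * volume W)
      = (σ + (T ^ 2 + T)) * volume W := by ring
    _ ≤ 1 * volume W := by gcongr
    _ = volume W := one_mul _
    _ ≤ volume (E ∩ W) + (volume (F ∩ W) + volume (G ∩ W)) := hWle
    _ ≤ T ^ 2 * volume W + (volume (F ∩ W) + T * volume W) := by gcongr
    _ = volume (F ∩ W) + (T ^ 2 * volume W + T * volume W) := by ring

lemma cell_isCube (a : Fin d → ℝ) {r : ℝ} (hr : 0 < r) (k : ℕ) (j : Fin d → ℕ) :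
    IsCube (cell a r k j) := by
  refine ⟨fun i => a i + j i * (r / 2 ^ k), r / 2 ^ k, by positivity, ?_⟩
  unfold cell
  apply congrArg Set.univ.pi
  funext i
  congr 1
  ring

lemma main {d : ℕ} (Q Ep Em G : Set (Fin d → ℝ)) (hQ : IsCube Q)
    (hEp : MeasurableSet Ep) (hEm : MeasurableSet Em) (hG : MeasurableSet G)
    (hu : Q = Ep ∪ Em ∪ G)
    (hmin : ENNReal.ofReal tau * volume G < min (volume Ep) (volume Em)) :
    ∃ W : Set (Fin d → ℝ), IsCube W ∧ W ⊆ Q ∧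
      ENNReal.ofReal (sc d) * volume W ≤ min (volume (Ep ∩ W)) (volume (Em ∩ W)) := by
  obtain ⟨A, R, hR, hQeq⟩ := hQ
  have hQcell : Q = cell A R 0 (fun _ => 0) := by rw [hQeq, cell_zero]
  have hEpQ : Ep ⊆ Q := by rw [hu]; exact subset_union_left.trans subset_union_left
  have hEmQ : Em ⊆ Q := by rw [hu]; exact subset_union_right.trans subset_union_left
  by_cases h1 : ENNReal.ofReal (sc d) * volume Q ≤ volume Ep
  · by_cases h2 : ENNReal.ofReal (sc d) * volume Q ≤ volume Em
    · refine ⟨Q, ⟨A, R, hR, hQeq⟩, subset_rfl, le_min ?_ ?_⟩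
      · rwa [inter_eq_left.mpr hEpQ]
      · rwa [inter_eq_left.mpr hEmQ]
    · -- Em is small
      obtain ⟨k, j, hb, hE', hF'⟩ := key A hR Em Ep G hEm hG
        (by rw [← hQcell]; exact hEmQ)
        (by rw [← hQcell, hu]; intro x hx; rcases hx with (h | h) | h
            · exact Or.inl (Or.inr h)
            · exact Or.inl (Or.inl h)
            · exact Or.inr h)
        (lt_of_le_of_lt (le_refl _) (lt_of_lt_of_le hmin (min_le_right _ _)))
        (by rw [← hQcell]; exact not_le.1 h2)
      refine ⟨cell A R k j, cell_isCube A hR k j, ?_, le_min hF' hE'⟩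
      rw [hQcell]; exact cell_subset_base A hR k j hb
  · -- Ep is small
    obtain ⟨k, j, hb, hE', hF'⟩ := key A hR Ep Em G hEp hG
      (by rw [← hQcell]; exact hEpQ)
      (by rw [← hQcell, hu])
      (lt_of_lt_of_le hmin (min_le_left _ _))
      (by rw [← hQcell]; exact not_le.1 h1)
    refine ⟨cell A R k j, cell_isCube A hR k j, ?_, le_min hE' hF'⟩
    rw [hQcell]; exact cell_subset_base A hR k j hb

end JSAux

theorem stmt2 {d : ℕ} (hd : 0 < d)
    (Q Ep Em G : Set (Fin d → ℝ)) (hQ : IsCube Q)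
    (hEp : MeasurableSet Ep) (hEm : MeasurableSet Em) (hG : MeasurableSet G)
    (h1 : Disjoint Ep Em) (h2 : Disjoint Ep G) (h3 : Disjoint Em G)
    (hu : Q = Ep ∪ Em ∪ G)
    (hmin : ENNReal.ofReal (Real.sqrt 2 - 1) * volume G < min (volume Ep) (volume Em)) :
    (∃ W : Set (Fin d → ℝ), IsCube W ∧ W ⊆ Q ∧
      ENNReal.ofReal ((2:ℝ) ^ (-(d:ℤ)) * (3 - 2 * Real.sqrt 2)) * volume W ≤
        min (volume (Ep ∩ W)) (volume (Em ∩ W))) ∧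
    IsJSPair volume {C : Set (Fin d → ℝ) | IsCube C}
      (Real.sqrt 2 - 1) ((2:ℝ) ^ (-(d:ℤ)) * (3 - 2 * Real.sqrt 2)) := by
  constructor
  · exact JSAux.main Q Ep Em G hQ hEp hEm hG hu hmin
  · refine ⟨JSAux.tau_pos, JSAux.sc_pos d, ?_⟩
    intro Q' hQ' Ep' Em' G' hEp' hEm' hG' _ _ _ hu' hmin'
    obtain ⟨W, hWc, hWQ, hWmin⟩ := JSAux.main Q' Ep' Em' G' hQ' hEp' hEm' hG' hu' hmin'
    refine ⟨W, hWc, hWQ, ?_⟩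
    rwa [inter_comm W Ep', inter_comm W Em']
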